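/- Let N, N' be two ultrametric norms on a finite-dimensional vector space V over a non-Archimedean field and let N∨N' denote their pointwise maximum. Then N∨N' is again an ultrametric norm, N ≤ N∨N', N' ≤ N∨N', and d₁(N, N') = vol(N, N∨N') + vol(N', N∨N') where for comparable norms M ≤ M', vol(M, M') = d₁(M, M') ≥ 0. -/

import Mathlib

/-- The ultrametric norm on `V` diagonalized by the basis `b` with weights `w`. -/
noncomputable def diagNorm {K V ι : Type*} [NontriviallyNormedField K]
    [AddCommGroup V] [Module K V] [Fintype ι] [Nonempty ι]
    (b : Module.Basis ι K V) (w : ι → ℝ) (v : V) : ℝ :=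
  Finset.univ.sup' Finset.univ_nonempty fun i => ‖b.repr v i‖ * w i

/-- The pointwise maximum `N ∨ N'` of two ultrametric norms. -/
noncomputable def joinNorm {K V ι : Type*} [NontriviallyNormedField K]
    [AddCommGroup V] [Module K V] [Fintype ι] [Nonempty ι]
    (b : Module.Basis ι K V) (w w' : ι → ℝ) (v : V) : ℝ :=
  max (diagNorm b w v) (diagNorm b w' v)

section aux
variable {K V ι : Type*} [NontriviallyNormedField K]
    [AddCommGroup V] [Module K V] [Fintype ι] [Nonempty ι]

lemma diagNorm_nonneg (b : Module.Basis ι K V) (w : ι → ℝ) (hw : ∀ i, 0 < w i) (v : V) :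
    0 ≤ diagNorm b w v := by
  obtain ⟨i⟩ := ‹Nonempty ι›
  unfold diagNorm
  exact le_trans (mul_nonneg (norm_nonneg _) (hw i).le)
    (Finset.le_sup' (fun i => ‖b.repr v i‖ * w i) (Finset.mem_univ i))

lemma diagNorm_eq_zero (b : Module.Basis ι K V) (w : ι → ℝ) (hw : ∀ i, 0 < w i) (v : V)
    (h : diagNorm b w v = 0) : v = 0 := by
  have hz : ∀ i, b.repr v i = 0 := by
    intro i
    have hle : ‖b.repr v i‖ * w i ≤ 0 := by
      rw [← h]; exact Finset.le_sup' (fun i => ‖b.repr v i‖ * w i) (Finset.mem_univ i)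
    by_contra hne
    have : (0:ℝ) < ‖b.repr v i‖ * w i := mul_pos (norm_pos_iff.mpr hne) (hw i)
    linarith
  have h0 : b.repr v = 0 := Finsupp.ext hz
  have := congrArg b.repr.symm h0
  simpa using this

lemma diagNorm_smul (b : Module.Basis ι K V) (w : ι → ℝ) (c : K) (v : V) :
    diagNorm b w (c • v) = ‖c‖ * diagNorm b w v := by
  unfold diagNorm
  have : (fun i => ‖b.repr (c • v) i‖ * w i) = fun i => ‖c‖ * (‖b.repr v i‖ * w i) := by
    funext i
    simp [norm_smul, mul_assoc]
  rw [this]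
  exact (Finset.comp_sup'_eq_sup'_comp _ (fun x => ‖c‖ * x)
    (fun x y => mul_max_of_nonneg x y (norm_nonneg c))).symm

lemma diagNorm_add (b : Module.Basis ι K V) (w : ι → ℝ) (hw : ∀ i, 0 < w i)
    [IsUltrametricDist K] (v u : V) :
    diagNorm b w (v + u) ≤ max (diagNorm b w v) (diagNorm b w u) := by
  unfold diagNorm
  apply Finset.sup'_le
  intro i _
  have h1 : ‖b.repr (v + u) i‖ ≤ max ‖b.repr v i‖ ‖b.repr u i‖ := by
    rw [map_add]
    simpa using IsUltrametricDist.norm_add_le_max (b.repr v i) (b.repr u i)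
  have h2 : ‖b.repr (v + u) i‖ * w i ≤ max (‖b.repr v i‖ * w i) (‖b.repr u i‖ * w i) := by
    rw [← max_mul_of_nonneg _ _ (hw i).le]
    exact mul_le_mul_of_nonneg_right h1 (hw i).le
  refine h2.trans (max_le_max ?_ ?_)
  · exact Finset.le_sup' (fun i => ‖b.repr v i‖ * w i) (Finset.mem_univ i)
  · exact Finset.le_sup' (fun i => ‖b.repr u i‖ * w i) (Finset.mem_univ i)

end aux

/-- The join `N ∨ N'` of two ultrametric norms (codiagonalized by a basis, with weights
`w, w'`) is again an ultrametric norm, with `N ≤ N∨N'` and `N' ≤ N∨N'`, and the `d₁`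
distance decomposes as `d₁(N,N') = vol(N, N∨N') + vol(N', N∨N')`, where for comparable
norms `vol` is the (normalized) sum of the relative spectrum. -/
theorem stmt_18 {K V ι : Type*} [NontriviallyNormedField K] [IsUltrametricDist K]
    [AddCommGroup V] [Module K V] [Fintype ι] [Nonempty ι]
    (b : Module.Basis ι K V) (w w' : ι → ℝ) (hw : ∀ i, 0 < w i) (hw' : ∀ i, 0 < w' i) :
    (∀ v, 0 ≤ joinNorm b w w' v) ∧
    (∀ v, joinNorm b w w' v = 0 → v = 0) ∧
    (∀ (c : K) (v : V), joinNorm b w w' (c • v) = ‖c‖ * joinNorm b w w' v) ∧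
    (∀ v u : V, joinNorm b w w' (v + u) ≤ max (joinNorm b w w' v) (joinNorm b w w' u)) ∧
    (∀ v, diagNorm b w v ≤ joinNorm b w w' v) ∧
    (∀ v, diagNorm b w' v ≤ joinNorm b w w' v) ∧
    ((Fintype.card ι : ℝ)⁻¹ * ∑ i, |Real.log (w' i / w i)|
      = (Fintype.card ι : ℝ)⁻¹ * ∑ i, Real.log (max (w i) (w' i) / w i)
        + (Fintype.card ι : ℝ)⁻¹ * ∑ i, Real.log (max (w i) (w' i) / w' i)) := by
  refine ⟨?_, ?_, ?_, ?_, ?_, ?_, ?_⟩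
  · intro v
    exact le_trans (diagNorm_nonneg b w hw v) (le_max_left _ _)
  · intro v h
    have := le_antisymm (h ▸ le_max_left (diagNorm b w v) (diagNorm b w' v))
      (diagNorm_nonneg b w hw v)
    exact diagNorm_eq_zero b w hw v this
  · intro c v
    unfold joinNorm
    rw [diagNorm_smul, diagNorm_smul, mul_max_of_nonneg _ _ (norm_nonneg c)]
  · intro v u
    unfold joinNorm
    rw [max_max_max_comm]
    exact max_le_max (diagNorm_add b w hw v u) (diagNorm_add b w' hw' v u)
  · intro v; exact le_max_left _ _
  · intro v; exact le_max_right _ _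
  · rw [← mul_add, ← Finset.sum_add_distrib]
    congr 1
    apply Finset.sum_congr rfl
    intro i _
    rcases le_total (w i) (w' i) with h | h
    · rw [max_eq_right h, Real.log_div (hw' i).ne' (hw i).ne',
        Real.log_div (hw' i).ne' (hw' i).ne', abs_of_nonneg]
      · ring
      · have := Real.log_le_log (hw i) h
        linarith
    · rw [max_eq_left h, Real.log_div (hw' i).ne' (hw i).ne',
        Real.log_div (hw i).ne' (hw i).ne', Real.log_div (hw i).ne' (hw' i).ne',
        abs_of_nonpos]
      · ring
      · have := Real.log_le_log (hw' i) h
        linarith
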